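/- Let α > −1. There exists a twice continuously differentiable function u₂ : (0,∞) → ℝ satisfying u₂''(r) + u₂'(r)/r + 8(1+α)² r^{2α}(1+r^{2+2α})^{−2} u₂(r) = 0 for every r > 0, such that both limits lim_{r→0⁺} u₂(r)/log r and lim_{r→∞} u₂(r)/log r exist and are nonzero. In particular u₂ is comparable to log r near 0 and near ∞, and u₂ is linearly independent from the bounded solution u₁(r) = (1−r^{2+2α})/(1+r^{2+2α}). -/

import Mathlib

open Filter Topology

section Aux

variable (k : ℝ)

/-- The second solution. -/
noncomputable def sol (r : ℝ) : ℝ :=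
  2 + k * Real.log r * ((1 - r ^ k) / (1 + r ^ k))

/-- Its first derivative. -/
noncomputable def sol' (r : ℝ) : ℝ :=
  k * ((1 - r ^ k) / (1 + r ^ k)) / r
    - 2 * k ^ 2 * r ^ k * Real.log r / (r * (1 + r ^ k) ^ 2)

lemma den_pos {k r : ℝ} (hr : 0 < r) : (0:ℝ) < 1 + r ^ k :=
  by positivity

lemma hasDerivAt_g {k r : ℝ} (hk : 0 < k) (hr : 0 < r) :
    HasDerivAt (fun y : ℝ => (1 - y ^ k) / (1 + y ^ k))
      (-2 * (k * (r ^ k / r)) / (1 + r ^ k) ^ 2) r := by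
  have hF : HasDerivAt (fun y : ℝ => y ^ k) (k * r ^ (k - 1)) r :=
    Real.hasDerivAt_rpow_const (Or.inl hr.ne')
  have hden : (1 : ℝ) + r ^ k ≠ 0 := (den_pos hr).ne'
  have hk1 : r ^ (k - 1) = r ^ k / r := by
    rw [Real.rpow_sub hr, Real.rpow_one]
  have h := ((hasDerivAt_const r (1:ℝ)).sub hF).div ((hasDerivAt_const r (1:ℝ)).add hF) hden
  refine h.congr_deriv ?_
  simp only [Pi.add_apply, Pi.sub_apply]
  rw [hk1]
  ring

lemma hasDerivAt_sol {k r : ℝ} (hk : 0 < k) (hr : 0 < r) :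
    HasDerivAt (sol k) (sol' k r) r := by
  have hg := hasDerivAt_g hk hr
  have hlog : HasDerivAt (fun y : ℝ => k * Real.log y) (k * r⁻¹) r :=
    (Real.hasDerivAt_log hr.ne').const_mul k
  have h := (hasDerivAt_const r (2:ℝ)).add (hlog.mul hg)
  have hden : (1 : ℝ) + r ^ k ≠ 0 := (den_pos hr).ne'
  refine h.congr_deriv ?_
  unfold sol'
  field_simp
  ring

lemma hasDerivAt_sol' {k r : ℝ} (hk : 0 < k) (hr : 0 < r) :
    HasDerivAt (sol' k)
      (-(sol' k r) / r
        - 2 * k ^ 2 * (r ^ k / r ^ 2) / (1 + r ^ k) ^ 2 * sol k r) r := by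
  have hg := hasDerivAt_g hk hr
  have hden : (1 : ℝ) + r ^ k ≠ 0 := (den_pos hr).ne'
  have hF : HasDerivAt (fun y : ℝ => y ^ k) (k * r ^ (k - 1)) r :=
    Real.hasDerivAt_rpow_const (Or.inl hr.ne')
  have hk1 : r ^ (k - 1) = r ^ k / r := by
    rw [Real.rpow_sub hr, Real.rpow_one]
  have hlog : HasDerivAt Real.log r⁻¹ r := Real.hasDerivAt_log hr.ne'
  -- first term : k * g r / r
  have h1 := (hg.const_mul k).div (hasDerivAt_id r) hr.ne'
  -- second term numerator: 2k^2 * r^k * log r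
  have hN := (hF.const_mul (2 * k ^ 2)).mul hlog
  -- denominator: r * (1 + r^k)^2
  have hD := (hasDerivAt_id r).mul (((hasDerivAt_const r (1:ℝ)).add hF).pow 2)
  have hDne : r * (1 + r ^ k) ^ 2 ≠ 0 := by positivity
  have h := h1.sub ((hN.div hD) hDne)
  refine h.congr_deriv ?_
  simp only [Pi.add_apply, Pi.sub_apply, Pi.mul_apply, Pi.pow_apply, Pi.div_apply, id]
  unfold sol sol'
  rw [hk1]
  have h2 : r ^ (2:ℝ) = r ^ (2:ℕ) := by
    rw [← Real.rpow_natCast r 2]; norm_num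
  field_simp
  ring

end Aux

/-- existence of a second fundamental solution `u₂` of the radial
(frequency-0) homogeneous linearized equation at the standard bubble, which is
comparable to `log r` both near `0` and near `∞`, and linearly independent from
the bounded solution `u₁(r) = (1-r^{2+2α})/(1+r^{2+2α})`. -/
theorem stmt7 (α : ℝ) (hα : α > -1) :
    ∃ u₂ : ℝ → ℝ, ContDiffOn ℝ 2 u₂ (Set.Ioi 0) ∧
      (∀ r : ℝ, 0 < r →
        deriv (deriv u₂) r + deriv u₂ r / r
          + 8 * (1 + α) ^ 2 * r ^ (2 * α) / (1 + r ^ (2 + 2 * α)) ^ 2 * u₂ r = 0) ∧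
      (∃ L : ℝ, L ≠ 0 ∧
        Tendsto (fun r => u₂ r / Real.log r) (nhdsWithin 0 (Set.Ioi 0)) (nhds L)) ∧
      (∃ L : ℝ, L ≠ 0 ∧
        Tendsto (fun r => u₂ r / Real.log r) atTop (nhds L)) ∧
      (∀ a b : ℝ,
        (∀ r : ℝ, 0 < r →
          a * ((1 - r ^ (2 + 2 * α)) / (1 + r ^ (2 + 2 * α))) + b * u₂ r = 0) →
        a = 0 ∧ b = 0) := by
  set k : ℝ := 2 + 2 * α with hk_def
  have hk : 0 < k := by simp only [hk_def]; linarith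
  have hderiv1 : ∀ r ∈ Set.Ioi (0:ℝ), deriv (sol k) r = sol' k r :=
    fun r hr => (hasDerivAt_sol hk hr).deriv
  refine ⟨sol k, ?_, ?_, ?_, ?_, ?_⟩
  · -- ContDiffOn
    intro r hr
    have hr' : (0:ℝ) < r := hr
    have h1 : ContDiffAt ℝ 2 (fun x : ℝ => x ^ k) r :=
      Real.contDiffAt_rpow_const_of_ne hr'.ne'
    have hlog : ContDiffAt ℝ 2 Real.log r := Real.contDiffAt_log.2 hr'.ne'
    exact (contDiffAt_const.add (((contDiffAt_const.mul hlog).mul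
      ((contDiffAt_const.sub h1).div (contDiffAt_const.add h1)
        (den_pos hr').ne')))).contDiffWithinAt
  · -- ODE
    intro r hr
    have h8 : 8 * (1 + α) ^ 2 = 2 * k ^ 2 := by rw [hk_def]; ring
    have h2a : r ^ (2 * α) = r ^ k / r ^ 2 := by
      rw [show (2:ℝ) * α = k - 2 by rw [hk_def]; ring, Real.rpow_sub hr]
      congr 1
      rw [← Real.rpow_natCast r 2]; norm_num
    have hEq : deriv (sol k) =ᶠ[nhds r] sol' k :=
      Filter.eventuallyEq_of_mem (Ioi_mem_nhds hr) hderiv1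
    have hdd : deriv (deriv (sol k)) r = deriv (sol' k) r := hEq.deriv_eq
    rw [hdd, (hasDerivAt_sol' hk hr).deriv, hderiv1 r hr, h8, h2a]
    field_simp
    ring
  · -- limit at 0⁺
    refine ⟨k, hk.ne', ?_⟩
    have hF0 : Tendsto (fun r : ℝ => r ^ k) (nhdsWithin 0 (Set.Ioi 0)) (nhds 0) := by
      have := (Real.continuousAt_rpow_const 0 k (Or.inr hk.le)).tendsto
      rw [Real.zero_rpow hk.ne'] at this
      exact this.mono_left nhdsWithin_le_nhds
    have hg0 : Tendsto (fun r : ℝ => (1 - r ^ k) / (1 + r ^ k))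
        (nhdsWithin 0 (Set.Ioi 0)) (nhds 1) := by
      have h := ((tendsto_const_nhds (x := (1:ℝ))).sub hF0).div
        ((tendsto_const_nhds (x := (1:ℝ))).add hF0) (by norm_num : (1:ℝ) + 0 ≠ 0)
      simp at h
      exact h
    have hlog0 : Tendsto Real.log (nhdsWithin 0 (Set.Ioi 0)) atBot :=
      Real.tendsto_log_nhdsGT_zero
    have hneg : Tendsto (fun r : ℝ => -Real.log r) (nhdsWithin 0 (Set.Ioi 0)) atTop :=
      tendsto_neg_atTop_iff.mpr hlog0
    have h2L : Tendsto (fun r : ℝ => 2 / Real.log r) (nhdsWithin 0 (Set.Ioi 0)) (nhds 0) := by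
      have h := tendsto_const_nhds.div_atTop (f := fun _ : ℝ => (-2:ℝ)) hneg
      have : (fun r : ℝ => 2 / Real.log r) = fun r => (-2) / (-Real.log r) := by
        funext r; rw [div_neg, neg_div, neg_neg]
      rw [this]; exact h
    have hmain : Tendsto (fun r : ℝ => 2 / Real.log r + k * ((1 - r ^ k) / (1 + r ^ k)))
        (nhdsWithin 0 (Set.Ioi 0)) (nhds k) := by
      have := h2L.add (hg0.const_mul k)
      simpa using this
    refine hmain.congr' ?_
    filter_upwards [Ioo_mem_nhdsGT_of_mem (by norm_num : (0:ℝ) ∈ Set.Ico 0 1)] with r hr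
    have hL : Real.log r ≠ 0 := (Real.log_neg hr.1 hr.2).ne
    unfold sol
    field_simp
  · -- limit at ∞
    refine ⟨-k, by simpa using hk.ne', ?_⟩
    have hFtop : Tendsto (fun r : ℝ => r ^ k) atTop atTop := tendsto_rpow_atTop hk
    have hden : Tendsto (fun r : ℝ => 1 + r ^ k) atTop atTop :=
      tendsto_atTop_add_const_left _ 1 hFtop
    have hg1 : Tendsto (fun r : ℝ => -1 + 2 / (1 + r ^ k)) atTop (nhds (-1)) := by
      have := (tendsto_const_nhds (x := (-1:ℝ))).add (tendsto_const_nhds.div_atTop (f := fun _ : ℝ => (2:ℝ)) hden)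
      simpa using this
    have hg : Tendsto (fun r : ℝ => (1 - r ^ k) / (1 + r ^ k)) atTop (nhds (-1)) := by
      refine hg1.congr' ?_
      filter_upwards [eventually_gt_atTop (0:ℝ)] with r hr
      have := (den_pos (k := k) hr).ne'
      field_simp
      ring
    have hlogT : Tendsto Real.log atTop atTop := Real.tendsto_log_atTop
    have h2L : Tendsto (fun r : ℝ => 2 / Real.log r) atTop (nhds 0) :=
      tendsto_const_nhds.div_atTop hlogT
    have hmain : Tendsto (fun r : ℝ => 2 / Real.log r + k * ((1 - r ^ k) / (1 + r ^ k)))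
        atTop (nhds (-k)) := by
      have := h2L.add (hg.const_mul k)
      simpa using this
    refine hmain.congr' ?_
    filter_upwards [eventually_gt_atTop (1:ℝ)] with r hr
    have hL : Real.log r ≠ 0 := (Real.log_pos hr).ne'
    unfold sol
    field_simp
  · -- linear independence
    intro a b h
    have h1 := h 1 one_pos
    have hu1 : sol k 1 = 2 := by unfold sol; simp
    rw [Real.one_rpow] at h1
    simp [hu1] at h1
    have hb : b = 0 := by linarith
    subst hb
    have h2 := h (1/2) (by norm_num)
    have hc1 : ((1:ℝ)/2) ^ k < 1 :=
      Real.rpow_lt_one (by norm_num) (by norm_num) hk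
    have hc0 : (0:ℝ) < ((1:ℝ)/2) ^ k := Real.rpow_pos_of_pos (by norm_num) k
    rw [zero_mul, add_zero] at h2
    have hfrac : (0:ℝ) < (1 - ((1:ℝ)/2) ^ k) / (1 + ((1:ℝ)/2) ^ k) :=
      div_pos (by linarith) (by linarith)
    constructor
    · by_contra ha
      exact (mul_ne_zero ha hfrac.ne') h2
    · rfl
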